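/- Let k ≥ 3 be an integer. If T is a finite tree (with at least two vertices) whose locating chromatic number equals k, then Δ(T) ≤ 4·3^(k-3), where Δ(T) denotes the maximum degree of T. -/
import Mathlib


/-- A proper `k`-coloring of `G`: a function onto the `k` colors such that
adjacent vertices receive different colors. -/
def IsProperColoring {V : Type*} (G : SimpleGraph V) (k : ℕ) (f : V → Fin k) : Prop :=
  Function.Surjective f ∧ ∀ u v : V, G.Adj u v → f u ≠ f v

/-- The color code of a vertex `v`: its `i`-th coordinate is the distance from `v`
to the color class `f⁻¹(i)`. -/
noncomputable def colorCode {V : Type*} (G : SimpleGraph V) {k : ℕ} (f : V → Fin k)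
    (v : V) : Fin k → ℕ :=
  fun i => sInf {n : ℕ | ∃ u : V, f u = i ∧ G.dist v u = n}

/-- A locating `k`-coloring: a proper `k`-coloring in which distinct vertices have
distinct color codes. -/
def IsLocatingColoring {V : Type*} (G : SimpleGraph V) (k : ℕ) (f : V → Fin k) : Prop :=
  IsProperColoring G k f ∧ Function.Injective (colorCode G f)

/-- The locating chromatic number: the least `k` admitting a locating `k`-coloring. -/
noncomputable def locatingChromaticNumber {V : Type*} (G : SimpleGraph V) : ℕ :=
  sInf {k : ℕ | ∃ f : V → Fin k, IsLocatingColoring G k f}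

section helpers
variable {V : Type*} {k : ℕ} {G : SimpleGraph V} {f : V → Fin k}

lemma codeSet_nonempty (hs : Function.Surjective f) (v : V) (i : Fin k) :
    {n : ℕ | ∃ u : V, f u = i ∧ G.dist v u = n}.Nonempty := by
  obtain ⟨u, hu⟩ := hs i
  exact ⟨G.dist v u, u, hu, rfl⟩

lemma code_le (v : V) {u : V} {i : Fin k} (hu : f u = i) :
    colorCode G f v i ≤ G.dist v u :=
  Nat.sInf_le ⟨u, hu, rfl⟩

lemma code_spec (hs : Function.Surjective f) (v : V) (i : Fin k) :
    ∃ u : V, f u = i ∧ G.dist v u = colorCode G f v i :=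
  Nat.sInf_mem (codeSet_nonempty hs v i)

lemma code_self (v : V) : colorCode G f v (f v) = 0 := by
  have h := code_le (G := G) v (rfl : f v = f v)
  rw [SimpleGraph.dist_self] at h
  omega

lemma code_ne_zero (hs : Function.Surjective f) (hc : G.Connected) {v : V} {i : Fin k}
    (h : f v ≠ i) : colorCode G f v i ≠ 0 := by
  intro h0
  obtain ⟨u, hu, hd⟩ := code_spec hs v i
  rw [h0] at hd
  rw [hc.dist_eq_zero_iff.mp hd] at h
  exact h hu

lemma code_adj (hs : Function.Surjective f) (hc : G.Connected) {u v : V}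
    (h : G.Adj u v) (i : Fin k) :
    colorCode G f u i ≤ colorCode G f v i + 1 := by
  obtain ⟨w, hw, hd⟩ := code_spec hs v i
  calc colorCode G f u i ≤ G.dist u w := code_le u hw
    _ ≤ G.dist u v + G.dist v w := hc.dist_triangle
    _ = colorCode G f v i + 1 := by
        rw [SimpleGraph.dist_eq_one_iff_adj.mpr h, hd]; omega

end helpers

lemma exists_locating {V : Type*} [Fintype V] {G : SimpleGraph V} (hc : G.Connected) :
    ∃ f : V → Fin (Fintype.card V), IsLocatingColoring G (Fintype.card V) f := by
  classical
  let e := Fintype.equivFin V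
  refine ⟨e, ⟨e.surjective, fun u v h => by simp [e.injective.ne h.ne]⟩, ?_⟩
  intro v w hvw
  have h2 : ∀ z : V, colorCode G (⇑e) z (e v) = G.dist z v := by
    intro z
    have hset : {n : ℕ | ∃ u : V, e u = e v ∧ G.dist z u = n} = {G.dist z v} := by
      ext n
      simp only [Set.mem_setOf_eq, Set.mem_singleton_iff, e.injective.eq_iff]
      constructor
      · rintro ⟨u, rfl, rfl⟩; rfl
      · rintro rfl; exact ⟨v, rfl, rfl⟩
    rw [colorCode]
    simp only [hset, csInf_singleton]
  have hv0 : colorCode G (⇑e) v (e v) = 0 := code_self v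
  have := h2 w
  rw [← hvw, hv0] at this
  exact (hc.dist_eq_zero_iff.mp this.symm).symm

lemma arith_aux : ∀ t : ℕ, (t + 2) * 2 ^ (t + 1) ≤ 4 * 3 ^ t := by
  intro t
  induction t with
  | zero => norm_num
  | succ n ih =>
    calc (n + 1 + 2) * 2 ^ (n + 1 + 1) = 2 * (n + 3) * 2 ^ (n + 1) := by ring
      _ ≤ 3 * (n + 2) * 2 ^ (n + 1) := Nat.mul_le_mul_right _ (by omega)
      _ = 3 * ((n + 2) * 2 ^ (n + 1)) := by ring
      _ ≤ 3 * (4 * 3 ^ n) := Nat.mul_le_mul_left _ ih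
      _ = 4 * 3 ^ (n + 1) := by ring

lemma arith_main {s k : ℕ} (hsk : s + 1 ≤ k) (hk : 3 ≤ k) :
    s * (2 ^ (s - 1) * 3 ^ (k - 1 - s)) ≤ 4 * 3 ^ (k - 3) := by
  match s with
  | 0 => simp
  | 1 =>
    have h1 : k - 1 - 1 = (k - 3) + 1 := by omega
    rw [h1, pow_succ]
    calc 1 * (2 ^ (1 - 1) * (3 ^ (k - 3) * 3)) = 3 ^ (k - 3) * 3 := by ring
      _ ≤ 3 ^ (k - 3) * 4 := Nat.mul_le_mul_left _ (by omega)
      _ = 4 * 3 ^ (k - 3) := by ring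
  | (t + 2) =>
    have h1 : (t + 2) * 2 ^ (t + 1) ≤ 4 * 3 ^ t := arith_aux t
    have h2 : k - 1 - (t + 2) = k - 3 - t := by omega
    have h3 : t + (k - 3 - t) = k - 3 := by omega
    calc (t + 2) * (2 ^ (t + 2 - 1) * 3 ^ (k - 1 - (t + 2)))
        = ((t + 2) * 2 ^ (t + 1)) * 3 ^ (k - 3 - t) := by rw [h2, show t + 2 - 1 = t + 1 from rfl]; ring
      _ ≤ (4 * 3 ^ t) * 3 ^ (k - 3 - t) := Nat.mul_le_mul_right _ h1
      _ = 4 * (3 ^ t * 3 ^ (k - 3 - t)) := by ring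
      _ = 4 * 3 ^ (k - 3) := by rw [← pow_add, h3]

lemma degree_le_of_locating {V : Type*} [Fintype V]
    (G : SimpleGraph V) [DecidableRel G.Adj] (hc : G.Connected) (k : ℕ) (hk : 3 ≤ k)
    (f : V → Fin k) (hsurj : Function.Surjective f)
    (hproper : ∀ u v : V, G.Adj u v → f u ≠ f v)
    (hinj : Function.Injective (colorCode G f)) (x : V) :
    G.degree x ≤ 4 * 3 ^ (k - 3) := by
  classical
  set c := f x with hcdef
  set N := G.neighborFinset x with hN
  set S := N.image f with hS
  set s := S.card with hs
  set a := colorCode G f x with ha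
  have hcS : c ∉ S := by
    simp only [hS, Finset.mem_image]
    rintro ⟨u, hu, hfu⟩
    rw [SimpleGraph.mem_neighborFinset] at hu
    exact hproper u x (G.adj_symm hu) (by rw [hfu])
  have hsk : s + 1 ≤ k := by
    have h2 := Finset.card_le_card (Finset.subset_univ (insert c S))
    rw [Finset.card_insert_of_notMem hcS, Finset.card_univ, Fintype.card_fin] at h2
    omega
  have hac : a c = 0 := by rw [ha, hcdef]; exact code_self x
  have haS : ∀ i ∈ S, a i = 1 := by
    intro i hi
    obtain ⟨u, hu, hfu⟩ := Finset.mem_image.mp hi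
    have hadj : G.Adj x u := by rwa [SimpleGraph.mem_neighborFinset] at hu
    have h1 : a i ≤ 1 := by
      have h := code_le (G := G) x hfu
      rwa [SimpleGraph.dist_eq_one_iff_adj.mpr hadj] at h
    have hci : c ≠ i := fun h => hcS (by rw [h]; exact hi)
    have h2 : a i ≠ 0 := code_ne_zero hsurj hc (by rw [← hcdef]; exact hci)
    omega
  have key : ∀ j ∈ S, (N.filter (fun u => f u = j)).card ≤ 2 ^ (s - 1) * 3 ^ (k - 1 - s) := by
    intro j hj
    have hjc : j ≠ c := fun h => hcS (h ▸ hj)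
    set opt : Fin k → Finset ℕ := fun i =>
      if i = c then {1} else if i = j then {0}
      else if i ∈ S then {1, 2} else {a i - 1, a i, a i + 1} with hopt
    have hmem : ∀ u ∈ N.filter (fun u => f u = j),
        colorCode G f u ∈ Fintype.piFinset opt := by
      intro u hu
      rw [Finset.mem_filter] at hu
      obtain ⟨huN, hfu⟩ := hu
      have hadj : G.Adj x u := by rwa [SimpleGraph.mem_neighborFinset] at huN
      rw [Fintype.mem_piFinset]
      intro i
      have hle : colorCode G f u i ≤ a i + 1 := code_adj hsurj hc hadj.symm i
      have hge : a i ≤ colorCode G f u i + 1 := code_adj hsurj hc hadj i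
      by_cases h1 : i = c
      · have hne : colorCode G f u i ≠ 0 :=
          code_ne_zero hsurj hc (by rw [hfu, h1]; exact hjc)
        have hac' : a i = 0 := by rw [h1]; exact hac
        have hcode : colorCode G f u i = 1 := by omega
        simp only [hopt]
        rw [if_pos h1, Finset.mem_singleton]
        exact hcode
      · by_cases h2 : i = j
        · have hcode : colorCode G f u i = 0 := by rw [h2, ← hfu]; exact code_self u
          simp only [hopt]
          rw [if_neg h1, if_pos h2, Finset.mem_singleton]
          exact hcode
        · have hfui : f u ≠ i := by rw [hfu]; exact fun h => h2 h.symm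
          have hne : colorCode G f u i ≠ 0 := code_ne_zero hsurj hc hfui
          by_cases h3 : i ∈ S
          · have hai : a i = 1 := haS i h3
            simp only [hopt, if_neg h1, if_neg h2, if_pos h3, Finset.mem_insert,
              Finset.mem_singleton]
            omega
          · simp only [hopt, if_neg h1, if_neg h2, if_neg h3, Finset.mem_insert,
              Finset.mem_singleton]
            omega
    have hinjOn : Set.InjOn (colorCode G f) (N.filter (fun u => f u = j)) :=
      fun u _ v _ h => hinj h
    have hcard := Finset.card_le_card_of_injOn _ hmem hinjOn
    rw [Fintype.card_piFinset] at hcard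
    refine hcard.trans ?_
    have hsplit := Finset.prod_sdiff (f := fun i => (opt i).card)
      (Finset.subset_univ (insert c S))
    rw [← hsplit]
    have h1 : ∏ i ∈ insert c S, (opt i).card = 2 ^ (s - 1) := by
      rw [Finset.prod_insert hcS]
      have hoc : (opt c).card = 1 := by simp [hopt]
      rw [hoc, one_mul, ← Finset.mul_prod_erase S _ hj]
      have hoj : (opt j).card = 1 := by simp [hopt, hjc]
      rw [hoj, one_mul]
      have hall : ∀ i ∈ S.erase j, (opt i).card = 2 := by
        intro i hi
        have hij : i ≠ j := (Finset.mem_erase.mp hi).1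
        have hiS : i ∈ S := (Finset.mem_erase.mp hi).2
        have hic : i ≠ c := fun h => hcS (h ▸ hiS)
        simp [hopt, hic, hij, hiS]
      rw [Finset.prod_congr rfl hall, Finset.prod_const, Finset.card_erase_of_mem hj]
    have h2 : ∏ i ∈ Finset.univ \ insert c S, (opt i).card ≤ 3 ^ (k - 1 - s) := by
      have hb : ∀ i ∈ Finset.univ \ insert c S, (opt i).card ≤ 3 := by
        intro i hi
        rw [Finset.mem_sdiff, Finset.mem_insert] at hi
        push_neg at hi
        have hic := hi.2.1
        have hiS := hi.2.2
        have hij : i ≠ j := fun h => hiS (h ▸ hj)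
        simp only [hopt, if_neg hic, if_neg hij, if_neg hiS]
        calc ({a i - 1, a i, a i + 1} : Finset ℕ).card
            ≤ ({a i, a i + 1} : Finset ℕ).card + 1 := Finset.card_insert_le _ _
          _ ≤ (({a i + 1} : Finset ℕ).card + 1) + 1 :=
              Nat.add_le_add_right (Finset.card_insert_le _ _) 1
          _ = 3 := by simp
      have := Finset.prod_le_pow_card _ _ _ hb
      refine this.trans ?_
      have hcards : (Finset.univ \ insert c S).card = k - 1 - s := by
        rw [Finset.card_sdiff_of_subset (Finset.subset_univ _), Finset.card_univ, Fintype.card_fin,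
          Finset.card_insert_of_notMem hcS]
        omega
      rw [hcards]
    calc (∏ i ∈ Finset.univ \ insert c S, (opt i).card) * ∏ i ∈ insert c S, (opt i).card
        ≤ 3 ^ (k - 1 - s) * 2 ^ (s - 1) := Nat.mul_le_mul h2 (le_of_eq h1)
      _ = 2 ^ (s - 1) * 3 ^ (k - 1 - s) := Nat.mul_comm _ _
  have hdeg : G.degree x = ∑ j ∈ S, (N.filter (fun u => f u = j)).card := by
    show N.card = _
    exact Finset.card_eq_sum_card_fiberwise (fun u hu => Finset.mem_image_of_mem f hu)
  rw [hdeg]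
  calc ∑ j ∈ S, (N.filter (fun u => f u = j)).card
      ≤ ∑ _j ∈ S, 2 ^ (s - 1) * 3 ^ (k - 1 - s) := Finset.sum_le_sum key
    _ = s * (2 ^ (s - 1) * 3 ^ (k - 1 - s)) := by rw [Finset.sum_const, smul_eq_mul]
    _ ≤ 4 * 3 ^ (k - 3) := arith_main hsk hk

/-- Theorem 2.3: if `T` is a finite tree (with at least two vertices) whose locating
chromatic number equals `k ≥ 3`, then `Δ(T) ≤ 4 * 3^(k-3)`. -/
theorem maxDegree_le_of_locatingChromaticNumber {V : Type*} [Fintype V] [Nontrivial V]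
    (G : SimpleGraph V) [DecidableRel G.Adj] (hT : G.IsTree) (k : ℕ) (hk : 3 ≤ k)
    (h : locatingChromaticNumber G = k) :
    G.maxDegree ≤ 4 * 3 ^ (k - 3) := by
  classical
  have hc : G.Connected := hT.isConnected
  have h' : sInf {k' : ℕ | ∃ f : V → Fin k', IsLocatingColoring G k' f} = k := h
  have hne : {k' : ℕ | ∃ f : V → Fin k', IsLocatingColoring G k' f}.Nonempty :=
    ⟨Fintype.card V, exists_locating hc⟩
  have hmem := Nat.sInf_mem hne
  rw [h'] at hmem
  obtain ⟨f, ⟨⟨hsurj, hproper⟩, hinj⟩⟩ := hmem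
  exact SimpleGraph.maxDegree_le_of_forall_degree_le (G := G) _
    (fun x => degree_le_of_locating G hc k hk f hsurj hproper hinj x)
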